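/- Let R(N, ℓ, x) count recursive trees on vertices labeled 0,…,N−1, rooted at 0, with ℓ vertices of degree 1 and smallest rooted path ending at x. Then for N > 2, R(N, ℓ, x) = Σ_{i=max(x,2)}^{N−2} R(N−1, ℓ−1, i) + Σ_{i=1}^{max(x−1,1)} R(N−1, ℓ, i). -/

import Mathlib

/-- A recursive tree on `N` vertices `0,…,N-1`, encoded by its parent function:
the parent of every nonroot vertex has a smaller label (and `f 0 = 0`). -/
def IsRecTree (N : ℕ) (f : Fin N → Fin N) : Prop :=
  ∀ v : Fin N, ((v : ℕ) = 0 → f v = v) ∧ ((v : ℕ) ≠ 0 → (f v : ℕ) < (v : ℕ))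

/-- The number of children of vertex `v`. -/
def childCount (N : ℕ) (f : Fin N → Fin N) (v : Fin N) : ℕ :=
  (Finset.univ.filter fun u : Fin N => (u : ℕ) ≠ 0 ∧ f u = v).card

/-- A leaf is a vertex of degree 1 in the underlying undirected tree:
a nonroot vertex with no children, or the root with exactly one child. -/
def IsLeaf (N : ℕ) (f : Fin N → Fin N) (v : Fin N) : Prop :=
  if (v : ℕ) = 0 then childCount N f v = 1 else childCount N f v = 0

/-- The number of leaves (vertices of degree 1, possibly including the root). -/
noncomputable def leafCount (N : ℕ) (f : Fin N → Fin N) : ℕ :=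
  Set.ncard { v : Fin N | IsLeaf N f v }

/-- The smallest rooted path (starting at the root and always descending to the
smallest-labeled child, until a childless vertex) ends at the vertex labeled `x`. -/
def SmallestPathEndsAt (N : ℕ) (f : Fin N → Fin N) (x : ℕ) : Prop :=
  ∃ (m : ℕ) (c : ℕ → Fin N), (c 0 : ℕ) = 0 ∧ (c m : ℕ) = x ∧
    (∀ i, i < m → (c (i + 1) : ℕ) ≠ 0 ∧ f (c (i + 1)) = c i ∧
      ∀ w : Fin N, (w : ℕ) ≠ 0 → f w = c i → c (i + 1) ≤ w) ∧
    childCount N f (c m) = 0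

/-- `R N ℓ x`: the number of recursive trees on `N` vertices with `ℓ` leaves
whose smallest rooted path ends at `x`. -/
noncomputable def R (N ℓ x : ℕ) : ℕ :=
  Set.ncard { f : Fin N → Fin N |
    IsRecTree N f ∧ leafCount N f = ℓ ∧ SmallestPathEndsAt N f x }

namespace RTaux


variable {M : ℕ}

def kids (f : Fin M → Fin M) (v : Fin M) : Finset (Fin M) :=
  Finset.univ.filter fun u : Fin M => (u : ℕ) ≠ 0 ∧ f u = v

lemma mem_kids {f : Fin M → Fin M} {u v : Fin M} :
    u ∈ kids f v ↔ (u : ℕ) ≠ 0 ∧ f u = v := by simp [kids]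

lemma childCount_eq (f : Fin M → Fin M) (v : Fin M) :
    childCount M f v = (kids f v).card := rfl

lemma kids_eq_empty_iff {f : Fin M → Fin M} {v : Fin M} :
    kids f v = ∅ ↔ childCount M f v = 0 := by
  rw [childCount_eq, Finset.card_eq_zero]

def nextV (f : Fin M → Fin M) (v : Fin M) : Fin M :=
  if h : (kids f v).Nonempty then (kids f v).min' h else v

lemma lt_of_mem_kids {f : Fin M → Fin M} (hf : IsRecTree M f) {u v : Fin M}
    (hu : u ∈ kids f v) : (v : ℕ) < (u : ℕ) := by
  obtain ⟨h0, hp⟩ := mem_kids.1 hu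
  have := (hf u).2 h0
  rw [hp] at this; exact this

lemma nextV_mem {f : Fin M → Fin M} {v : Fin M} (h : (kids f v).Nonempty) :
    nextV f v ∈ kids f v := by
  rw [nextV, dif_pos h]; exact Finset.min'_mem _ h

lemma nextV_le {f : Fin M → Fin M} {v u : Fin M} (h : u ∈ kids f v) :
    nextV f v ≤ u := by
  rw [nextV, dif_pos ⟨u, h⟩]; exact Finset.min'_le _ _ h

lemma nextV_eq_of_empty {f : Fin M → Fin M} {v : Fin M} (h : kids f v = ∅) :
    nextV f v = v := by
  rw [nextV, dif_neg]; simp [h]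

lemma lt_nextV {f : Fin M → Fin M} (hf : IsRecTree M f) {v : Fin M}
    (h : (kids f v).Nonempty) : (v : ℕ) < (nextV f v : ℕ) :=
  lt_of_mem_kids hf (nextV_mem h)

lemma le_nextV {f : Fin M → Fin M} (hf : IsRecTree M f) (v : Fin M) :
    (v : ℕ) ≤ (nextV f v : ℕ) := by
  by_cases h : (kids f v).Nonempty
  · exact le_of_lt (lt_nextV hf h)
  · rw [nextV, dif_neg h]

lemma kids_empty_of_nextV_eq {f : Fin M → Fin M} (hf : IsRecTree M f) {v : Fin M}
    (h : nextV f v = v) : kids f v = ∅ := by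
  by_contra hne
  have h1 : (kids f v).Nonempty := Finset.nonempty_of_ne_empty hne
  have := lt_nextV hf h1
  rw [h] at this; omega

lemma iter_mono {f : Fin M → Fin M} (hf : IsRecTree M f) (w : Fin M) :
    ∀ {k l : ℕ}, k ≤ l → (((nextV f)^[k] w : Fin M) : ℕ) ≤ (((nextV f)^[l] w) : ℕ) := by
  intro k l h
  induction l with
  | zero =>
    have hk0 : k = 0 := Nat.le_zero.mp h
    subst hk0; exact le_rfl
  | succ n ih =>
    rcases Nat.lt_or_ge k (n+1) with h' | h'
    · have := ih (by omega)
      calc ((nextV f)^[k] w : ℕ) ≤ _ := this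
        _ ≤ _ := by
          rw [Function.iterate_succ_apply']
          exact le_nextV hf _
    · have : k = n + 1 := by omega
      subst this; rfl

def fzero (M : ℕ) [NeZero M] : Fin M := ⟨0, Nat.pos_of_ne_zero (NeZero.ne M)⟩

noncomputable def endpt (M : ℕ) [NeZero M] (f : Fin M → Fin M) : Fin M :=
  (nextV f)^[M] (fzero M)

lemma exists_fixed_lt {f : Fin M → Fin M} [NeZero M] (hf : IsRecTree M f) :
    ∃ k < M, nextV f ((nextV f)^[k] (fzero M)) = (nextV f)^[k] (fzero M) := by
  by_contra hcon
  push_neg at hcon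
  have key : ∀ k, k ≤ M → k ≤ (((nextV f)^[k] (fzero M)) : ℕ) := by
    intro k hk
    induction k with
    | zero => omega
    | succ n ih =>
      have h1 : n ≤ ((nextV f)^[n] (fzero M) : ℕ) := ih (by omega)
      have h2 := hcon n (by omega)
      have h3 : ((nextV f)^[n] (fzero M) : ℕ) < ((nextV f)^[n+1] (fzero M) : ℕ) := by
        rw [Function.iterate_succ_apply']
        refine lt_nextV hf ?_
        by_contra hne
        rw [Finset.not_nonempty_iff_eq_empty] at hne
        exact h2 (by rw [nextV_eq_of_empty hne])
      omega
  have := key M le_rfl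
  have := ((nextV f)^[M] (fzero M)).isLt
  omega

lemma nextV_endpt {f : Fin M → Fin M} [NeZero M] (hf : IsRecTree M f) :
    nextV f (endpt M f) = endpt M f := by
  obtain ⟨k, hk, hfix⟩ := exists_fixed_lt hf
  have h2 : (nextV f)^[M - k + k] (fzero M) = (nextV f)^[k] (fzero M) := by
    rw [Function.iterate_add_apply]
    exact Function.iterate_fixed hfix _
  have h3 : M - k + k = M := by omega
  rw [h3] at h2
  rw [endpt, h2]; exact hfix

lemma iter_ge_endpt {f : Fin M → Fin M} [NeZero M] (hf : IsRecTree M f) {k : ℕ}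
    (hk : M ≤ k) : (nextV f)^[k] (fzero M) = endpt M f := by
  have h2 : (nextV f)^[k - M + M] (fzero M) = (nextV f)^[M] (fzero M) := by
    rw [Function.iterate_add_apply]
    exact Function.iterate_fixed (nextV_endpt hf) _
  have h3 : k - M + M = k := by omega
  rw [h3] at h2
  exact h2

lemma kids_endpt {f : Fin M → Fin M} [NeZero M] (hf : IsRecTree M f) :
    kids f (endpt M f) = ∅ :=
  kids_empty_of_nextV_eq hf (nextV_endpt hf)

lemma iter_fixed_of_kids_empty {f : Fin M → Fin M} {v : Fin M}
    (h : kids f v = ∅) (k : ℕ) : (nextV f)^[k] v = v :=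
  Function.iterate_fixed (nextV_eq_of_empty h) k

/-- the functional characterization of `SmallestPathEndsAt` for recursive trees. -/
lemma ends_iff {f : Fin M → Fin M} [NeZero M] (hf : IsRecTree M f) {i : ℕ} :
    SmallestPathEndsAt M f i ↔ (endpt M f : ℕ) = i := by
  constructor
  · rintro ⟨m, c, h0, hm, hstep, hend⟩
    have hiter : ∀ k, k ≤ m → (nextV f)^[k] (fzero M) = c k := by
      intro k hk
      induction k with
      | zero =>
        have : c 0 = fzero M := by
          apply Fin.ext; rw [h0]; rfl
        rw [this]; rfl
      | succ n ih =>
        have h1 := ih (by omega)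
        obtain ⟨hne, hpar, hmin⟩ := hstep n (by omega)
        have hmem : c (n+1) ∈ kids f (c n) := mem_kids.2 ⟨hne, hpar⟩
        rw [Function.iterate_succ_apply', h1]
        apply le_antisymm
        · exact nextV_le hmem
        · have hmm := nextV_mem ⟨_, hmem⟩
          obtain ⟨hne', hpar'⟩ := mem_kids.1 hmm
          exact hmin _ hne' hpar'
    -- c is strictly increasing, so m ≤ value of c m < M
    have hinc : ∀ k, k ≤ m → k ≤ (c k : ℕ) := by
      intro k hk
      induction k with
      | zero => omega
      | succ n ih =>
        have h1 := ih (by omega)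
        obtain ⟨hne, hpar, _⟩ := hstep n (by omega)
        have : (c n : ℕ) < (c (n+1) : ℕ) := by
          have := (hf (c (n+1))).2 hne
          rw [hpar] at this; exact this
        omega
    have hmM : m < M := by
      have := hinc m le_rfl
      have := (c m).isLt
      omega
    have hfix : (nextV f)^[M] (fzero M) = c m := by
      have h1 : (nextV f)^[m] (fzero M) = c m := hiter m le_rfl
      have h2 : (nextV f)^[M - m + m] (fzero M) = c m := by
        rw [Function.iterate_add_apply, h1]
        exact iter_fixed_of_kids_empty (kids_eq_empty_iff.2 hend) _
      have h3 : M - m + m = M := by omega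
      rwa [h3] at h2
    rw [endpt, hfix, hm]
  · intro h
    -- construct the path
    have hex : ∃ k, childCount M f ((nextV f)^[k] (fzero M)) = 0 :=
      ⟨M, by rw [iter_ge_endpt hf le_rfl]; exact kids_eq_empty_iff.1 (kids_endpt hf)⟩
    set m := Nat.find hex with hmdef
    have hmin : ∀ k, k < m → childCount M f ((nextV f)^[k] (fzero M)) ≠ 0 := by
      intro k hk; exact Nat.find_min hex hk
    have hmspec : childCount M f ((nextV f)^[m] (fzero M)) = 0 := Nat.find_spec hex
    have hmM : m ≤ M := Nat.find_le (by rw [iter_ge_endpt hf le_rfl]; exact kids_eq_empty_iff.1 (kids_endpt hf))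
    have hiterm : (nextV f)^[m] (fzero M) = endpt M f := by
      have h2 : (nextV f)^[M - m + m] (fzero M) = (nextV f)^[m] (fzero M) := by
        rw [Function.iterate_add_apply]
        exact iter_fixed_of_kids_empty (kids_eq_empty_iff.2 hmspec) _
      have h3 : M - m + m = M := by omega
      rw [h3] at h2
      rw [← h2]; rfl
    refine ⟨m, fun k => (nextV f)^[k] (fzero M), rfl, ?_, ?_, hmspec⟩
    · show ((nextV f)^[m] (fzero M) : ℕ) = i
      rw [hiterm, h]
    · intro k hk
      have hne : (kids f ((nextV f)^[k] (fzero M))).Nonempty := by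
        rw [Finset.nonempty_iff_ne_empty]
        intro hempty
        exact hmin k hk (kids_eq_empty_iff.1 hempty)
      have hmem : (nextV f)^[k+1] (fzero M) ∈ kids f ((nextV f)^[k] (fzero M)) := by
        rw [Function.iterate_succ_apply']
        exact nextV_mem hne
      obtain ⟨h1, h2⟩ := mem_kids.1 hmem
      refine ⟨h1, h2, ?_⟩
      intro w hw0 hwpar
      show (nextV f)^[k+1] (fzero M) ≤ w
      rw [Function.iterate_succ_apply']
      exact nextV_le (mem_kids.2 ⟨hw0, hwpar⟩)


-- NEW MATERIAL STARTS HERE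
lemma fzero_val (M : ℕ) [NeZero M] : (fzero M : ℕ) = 0 := rfl

lemma lt_of_mem_kids' {f : Fin M → Fin M} (hf : IsRecTree M f) {u v : Fin M}
    (hu : u ∈ kids f v) : (v : ℕ) < (u : ℕ) := by
  obtain ⟨h0, hp⟩ := mem_kids.1 hu
  have := (hf u).2 h0
  rw [hp] at this; exact this

lemma one_mem_kids [NeZero M] (hM : 2 ≤ M) {f : Fin M → Fin M} (hf : IsRecTree M f) :
    (⟨1, by omega⟩ : Fin M) ∈ kids f (fzero M) := by
  refine mem_kids.2 ⟨by simp, ?_⟩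
  have h1 : (f ⟨1, by omega⟩ : ℕ) < 1 := (hf ⟨1, by omega⟩).2 (by simp)
  apply Fin.ext
  rw [fzero_val]; omega

lemma nextV_zero [NeZero M] (hM : 2 ≤ M) {f : Fin M → Fin M} (hf : IsRecTree M f) :
    nextV f (fzero M) = ⟨1, by omega⟩ := by
  apply le_antisymm
  · exact nextV_le (one_mem_kids hM hf)
  · have hmem := nextV_mem ⟨_, one_mem_kids hM hf⟩
    have h0 := (mem_kids.1 hmem).1
    rw [Fin.le_def]
    simpa using Nat.one_le_iff_ne_zero.2 h0

lemma endpt_pos [NeZero M] (hM : 2 ≤ M) {f : Fin M → Fin M} (hf : IsRecTree M f) :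
    1 ≤ (endpt M f : ℕ) := by
  have h1 : ((nextV f)^[1] (fzero M) : ℕ) = 1 := by
    simp [nextV_zero hM hf]
  have := iter_mono hf (fzero M) (show 1 ≤ M by omega)
  rw [h1] at this
  exact this

lemma endpt_eq_one_iff [NeZero M] (hM : 2 ≤ M) {f : Fin M → Fin M} (hf : IsRecTree M f) :
    (endpt M f : ℕ) = 1 ↔ childCount M f ⟨1, by omega⟩ = 0 := by
  constructor
  · intro h
    have : endpt M f = ⟨1, by omega⟩ := Fin.ext h
    rw [← kids_eq_empty_iff, ← this]
    exact kids_endpt hf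
  · intro h
    have h1 : (nextV f)^[1] (fzero M) = ⟨1, by omega⟩ := by
      simp [nextV_zero hM hf]
    have h2 : (nextV f)^[M] (fzero M) = ⟨1, by omega⟩ := by
      have h3 : (nextV f)^[(M-1) + 1] (fzero M) = ⟨1, by omega⟩ := by
        rw [Function.iterate_add_apply, h1]
        exact iter_fixed_of_kids_empty (kids_eq_empty_iff.2 h) _
      have h4 : M - 1 + 1 = M := by omega
      rwa [h4] at h3
    rw [endpt, h2]

lemma leafCount_pos [NeZero M] (hM : 2 ≤ M) {f : Fin M → Fin M} (hf : IsRecTree M f) :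
    1 ≤ leafCount M f := by
  have hleaf : IsLeaf M f (endpt M f) := by
    rw [IsLeaf, if_neg (by have := endpt_pos hM hf; omega)]
    rw [← kids_eq_empty_iff]
    exact kids_endpt hf
  rw [leafCount]
  exact (Set.ncard_pos (Set.toFinite _)).2 ⟨_, hleaf⟩


section Del

variable (N x : ℕ)

def emb (v : Fin (N-1)) : Fin N :=
  if (v:ℕ) < x then ⟨v, by have := v.isLt; omega⟩ else ⟨(v:ℕ)+1, by have := v.isLt; omega⟩

lemma emb_val (v : Fin (N-1)) : (emb N x v : ℕ) = if (v:ℕ) < x then (v:ℕ) else (v:ℕ)+1 := by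
  rw [emb]; split_ifs <;> rfl

lemma emb_ne_x (v : Fin (N-1)) : (emb N x v : ℕ) ≠ x := by
  rw [emb_val]; split_ifs <;> omega

lemma emb_inj : Function.Injective (emb N x) := by
  intro a b h
  have h2 := congrArg Fin.val h
  rw [emb_val, emb_val] at h2
  apply Fin.ext
  split_ifs at h2 <;> omega

variable (hc : 3 ≤ N ∧ 1 ≤ x ∧ x ≤ N - 1)
include hc

def prj (w : Fin N) : Fin (N-1) :=
  if h : (w:ℕ) < x then ⟨w, by obtain ⟨h1,h2,h3⟩ := hc; omega⟩
  else ⟨(w:ℕ)-1, by obtain ⟨h1,h2,h3⟩ := hc; have := w.isLt; omega⟩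

def vX : Fin N := ⟨x, by obtain ⟨h1,h2,h3⟩ := hc; omega⟩

lemma vX_val : (vX N x hc : ℕ) = x := rfl

lemma prj_val (w : Fin N) : (prj N x hc w : ℕ) = if (w:ℕ) < x then (w:ℕ) else (w:ℕ)-1 := by
  rw [prj]; split_ifs <;> rfl

lemma prj_emb (v : Fin (N-1)) : prj N x hc (emb N x v) = v := by
  apply Fin.ext
  simp only [prj_val, emb_val]
  split_ifs <;> omega

lemma emb_prj (w : Fin N) (h : (w:ℕ) ≠ x) : emb N x (prj N x hc w) = w := by
  apply Fin.ext
  simp only [emb_val, prj_val]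
  split_ifs <;> omega

lemma emb_zero_iff (v : Fin (N-1)) : (emb N x v : ℕ) = 0 ↔ (v:ℕ) = 0 := by
  obtain ⟨h1,h2,h3⟩ := hc
  rw [emb_val]; split_ifs <;> simp only [false_iff, Nat.succ_ne_zero] <;> omega

lemma prj_zero_iff (w : Fin N) (h : (w:ℕ) ≠ x) : (prj N x hc w : ℕ) = 0 ↔ (w:ℕ) = 0 := by
  obtain ⟨h1,h2,h3⟩ := hc
  rw [prj_val]; split_ifs <;> omega

lemma prj_mono {a b : Fin N} (ha : (a:ℕ) ≠ x) (hb : (b:ℕ) ≠ x) (h : a ≤ b) :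
    prj N x hc a ≤ prj N x hc b := by
  rw [Fin.le_def] at h ⊢
  simp only [prj_val]
  split_ifs <;> omega

def del (f : Fin N → Fin N) : Fin (N-1) → Fin (N-1) :=
  fun v => prj N x hc (f (emb N x v))

variable {f : Fin N → Fin N}

lemma f_ne_vX (hcc : childCount N f (vX N x hc) = 0) {w : Fin N} (hw : (w:ℕ) ≠ 0) :
    f w ≠ vX N x hc := by
  intro heq
  have hmem : w ∈ kids f (vX N x hc) := mem_kids.2 ⟨hw, heq⟩
  rw [← kids_eq_empty_iff] at hcc
  rw [hcc] at hmem
  exact absurd hmem (Finset.notMem_empty _)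

lemma mem_kids_del (hcc : childCount N f (vX N x hc) = 0) {u v : Fin (N-1)} :
    u ∈ kids (del N x hc f) v ↔ emb N x u ∈ kids f (emb N x v) := by
  rw [mem_kids, mem_kids]
  constructor
  · rintro ⟨h0, hp⟩
    have h0' : (emb N x u : ℕ) ≠ 0 := fun h => h0 ((emb_zero_iff N x hc u).1 h)
    refine ⟨h0', ?_⟩
    have hne : f (emb N x u) ≠ vX N x hc := f_ne_vX N x hc hcc h0'
    have hnex : (f (emb N x u) : ℕ) ≠ x := by
      intro hval; exact hne (Fin.ext hval)
    have hp' : prj N x hc (f (emb N x u)) = v := hp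
    have h5 := congrArg (emb N x) hp'
    rw [emb_prj N x hc (f (emb N x u)) hnex] at h5
    exact h5
  · rintro ⟨h0, hp⟩
    refine ⟨fun h => h0 ((emb_zero_iff N x hc u).2 h), ?_⟩
    show prj N x hc (f (emb N x u)) = v
    rw [hp, prj_emb]

lemma del_rec (hf : IsRecTree N f) (hcc : childCount N f (vX N x hc) = 0) :
    IsRecTree (N-1) (del N x hc f) := by
  intro v
  constructor
  · intro h0
    have hev : (emb N x v : ℕ) = 0 := (emb_zero_iff N x hc v).2 h0
    have : f (emb N x v) = emb N x v := (hf _).1 hev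
    show prj N x hc (f (emb N x v)) = v
    rw [this, prj_emb]
  · intro h0
    have hev : (emb N x v : ℕ) ≠ 0 := fun h => h0 ((emb_zero_iff N x hc v).1 h)
    have hlt : (f (emb N x v) : ℕ) < (emb N x v : ℕ) := (hf _).2 hev
    have hnex : (f (emb N x v) : ℕ) ≠ x := by
      intro hval; exact f_ne_vX N x hc hcc hev (Fin.ext hval)
    show (prj N x hc (f (emb N x v)) : ℕ) < (v : ℕ)
    have h1 := prj_val N x hc (f (emb N x v))
    have h2 := emb_val N x v
    obtain ⟨hc1,hc2,hc3⟩ := hc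
    split_ifs at h1 h2 <;> omega

lemma dstep (hcc : childCount N f (vX N x hc) = 0) {v : Fin N} (hvx : (v:ℕ) < x)
    (hX : vX N x hc ∉ kids f v) (hne : (kids f v).Nonempty) :
    nextV (del N x hc f) (prj N x hc v) = prj N x hc (nextV f v) := by
  have hvne : (v:ℕ) ≠ x := by omega
  have hepv : emb N x (prj N x hc v) = v := emb_prj N x hc v hvne
  set w := nextV f v with hw
  have hwmem : w ∈ kids f v := nextV_mem hne
  have hwne : (w:ℕ) ≠ x := by
    intro hval; exact hX (by rw [show vX N x hc = w from Fin.ext hval.symm]; exact hwmem)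
  have hmem' : prj N x hc w ∈ kids (del N x hc f) (prj N x hc v) := by
    rw [mem_kids_del N x hc hcc, hepv, emb_prj N x hc w hwne]
    exact hwmem
  apply le_antisymm
  · exact nextV_le hmem'
  · have hmm := nextV_mem ⟨_, hmem'⟩
    rw [mem_kids_del N x hc hcc, hepv] at hmm
    have h1 : w ≤ emb N x (nextV (del N x hc f) (prj N x hc v)) := nextV_le hmm
    have h2 := prj_mono N x hc hwne (emb_ne_x N x _) h1
    rwa [prj_emb] at h2


variable [NeZero (N-1)] [NeZero N]

/-- index of the last vertex on the smallest path of `g` with label `< x`. -/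
noncomputable def Kg (g : Fin (N-1) → Fin (N-1)) : ℕ :=
  Nat.findGreatest (fun k => (((nextV g)^[k] (fzero (N-1))) : ℕ) < x) (N-1)

/-- the attachment vertex: last vertex on the smallest path of `g` with label `< x`. -/
noncomputable def Ag (g : Fin (N-1) → Fin (N-1)) : Fin (N-1) :=
  (nextV g)^[Kg N x g] (fzero (N-1))

noncomputable def Pg (g : Fin (N-1) → Fin (N-1)) : Fin N := emb N x (Ag N x g)

noncomputable def ins (g : Fin (N-1) → Fin (N-1)) : Fin N → Fin N :=
  fun w => if (w:ℕ) = x then Pg N x g else emb N x (g (prj N x hc w))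

variable {g : Fin (N-1) → Fin (N-1)}

omit hc in
lemma Kg_le : Kg N x g ≤ N - 1 := Nat.findGreatest_le _

lemma Ag_lt : (Ag N x g : ℕ) < x := by
  obtain ⟨h1,h2,h3⟩ := id hc
  have h0 : (((nextV g)^[0] (fzero (N-1))) : ℕ) < x := by simpa [fzero_val] using (show 0 < x by omega)
  exact Nat.findGreatest_spec (P := fun k => (((nextV g)^[k] (fzero (N-1))) : ℕ) < x)
    (n := N-1) (Nat.zero_le _) h0

omit hc in
lemma iterG_lt (hg : IsRecTree (N-1) g) {k : ℕ} (hk : k ≤ Kg N x g) :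
    (((nextV g)^[k] (fzero (N-1))) : ℕ) ≤ (Ag N x g : ℕ) :=
  iter_mono hg _ hk

omit hc in
lemma iterG_after (j : ℕ) (hj : Kg N x g < j) (hjM : j ≤ N - 1) :
    ¬ ((((nextV g)^[j] (fzero (N-1))) : ℕ) < x) :=
  Nat.findGreatest_is_greatest (P := fun k => (((nextV g)^[k] (fzero (N-1))) : ℕ) < x) hj hjM

lemma ins_apply_x : ins N x hc g (vX N x hc) = Pg N x g := by
  rw [ins, if_pos (vX_val N x hc)]

lemma ins_apply_ne {w : Fin N} (h : (w:ℕ) ≠ x) :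
    ins N x hc g w = emb N x (g (prj N x hc w)) := by
  rw [ins, if_neg h]

lemma mem_kids_ins {u v' : Fin (N-1)} :
    emb N x u ∈ kids (ins N x hc g) (emb N x v') ↔ u ∈ kids g v' := by
  rw [mem_kids, mem_kids]
  have h1 : (emb N x u : ℕ) ≠ 0 ↔ (u:ℕ) ≠ 0 := not_congr (emb_zero_iff N x hc u)
  rw [h1, ins_apply_ne N x hc (emb_ne_x N x u), prj_emb]
  constructor
  · rintro ⟨h0, hp⟩; exact ⟨h0, emb_inj N x hp⟩
  · rintro ⟨h0, hp⟩; exact ⟨h0, by rw [hp]⟩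

lemma mem_kids_ins_X {w : Fin N} :
    vX N x hc ∈ kids (ins N x hc g) w ↔ w = Pg N x g := by
  rw [mem_kids]
  obtain ⟨h1,h2,h3⟩ := hc
  constructor
  · rintro ⟨h0, hp⟩; rw [← hp, ins_apply_x]
  · intro h; exact ⟨by rw [vX_val]; omega, by rw [ins_apply_x, h]⟩

lemma cc_ins_x : childCount N (ins N x hc g) (vX N x hc) = 0 := by
  rw [← kids_eq_empty_iff]
  rw [Finset.eq_empty_iff_forall_notMem]
  intro u hu
  obtain ⟨h0, hp⟩ := mem_kids.1 hu
  by_cases hux : (u:ℕ) = x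
  · have : u = vX N x hc := Fin.ext hux
    rw [this, ins_apply_x] at hp
    have := congrArg Fin.val hp
    rw [vX_val] at this
    have h4 := Ag_lt N x hc (g := g)
    rw [Pg, emb_val] at this
    split_ifs at this <;> omega
  · rw [ins_apply_ne N x hc hux] at hp
    exact emb_ne_x N x _ (by rw [hp, vX_val])

lemma kids_ins_emb (v' : Fin (N-1)) :
    kids (ins N x hc g) (emb N x v') =
      if emb N x v' = Pg N x g then insert (vX N x hc) ((kids g v').image (emb N x))
      else (kids g v').image (emb N x) := by
  ext u
  by_cases hux : (u:ℕ) = x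
  · have hu : u = vX N x hc := Fin.ext hux
    subst hu
    rw [mem_kids_ins_X N x hc]
    have himg : vX N x hc ∉ (kids g v').image (emb N x) := by
      intro hmem
      obtain ⟨a, _, ha⟩ := Finset.mem_image.1 hmem
      exact emb_ne_x N x a (by rw [ha, vX_val])
    split_ifs with h
    · simp [h, himg]
    · simp [h, himg]
  · have hu : u = emb N x (prj N x hc u) := (emb_prj N x hc u hux).symm
    have hne : u ≠ vX N x hc := fun h => hux (by rw [h, vX_val])
    rw [hu, mem_kids_ins N x hc]
    have himg : emb N x (prj N x hc u) ∈ (kids g v').image (emb N x) ↔ prj N x hc u ∈ kids g v' := by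
      constructor
      · intro hmem
        obtain ⟨a, hak, ha⟩ := Finset.mem_image.1 hmem
        rwa [show a = prj N x hc u from emb_inj N x ha]  at hak
      · intro hmem; exact Finset.mem_image.2 ⟨_, hmem, rfl⟩
    split_ifs with h
    · rw [Finset.mem_insert, himg]
      have : emb N x (prj N x hc u) ≠ vX N x hc := by rw [← hu]; exact hne
      tauto
    · rw [himg]

lemma cc_ins_emb (v' : Fin (N-1)) :
    childCount N (ins N x hc g) (emb N x v') =
      childCount (N-1) g v' + (if emb N x v' = Pg N x g then 1 else 0) := by
  rw [childCount_eq, childCount_eq, kids_ins_emb N x hc]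
  have hcard : ((kids g v').image (emb N x)).card = (kids g v').card :=
    Finset.card_image_of_injective _ (emb_inj N x)
  split_ifs with h
  · rw [Finset.card_insert_of_notMem, hcard]
    intro hmem
    obtain ⟨a, _, ha⟩ := Finset.mem_image.1 hmem
    exact emb_ne_x N x a (by rw [ha, vX_val])
  · rw [hcard, Nat.add_zero]

lemma ins_rec (hg : IsRecTree (N-1) g) : IsRecTree N (ins N x hc g) := by
  obtain ⟨h1,h2,h3⟩ := id hc
  intro v
  constructor
  · intro h0
    have hvx : (v:ℕ) ≠ x := by omega
    rw [ins_apply_ne N x hc hvx]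
    have hp0 : (prj N x hc v : ℕ) = 0 := by rw [prj_val]; split_ifs <;> omega
    rw [(hg _).1 hp0]
    exact emb_prj N x hc v (by omega)
  · intro h0
    by_cases hvx : (v:ℕ) = x
    · rw [show v = vX N x hc from Fin.ext hvx, ins_apply_x, vX_val]
      have h4 := Ag_lt N x hc (g := g)
      rw [Pg, emb_val]
      split_ifs <;> omega
    · rw [ins_apply_ne N x hc hvx]
      have hp0 : (prj N x hc v : ℕ) ≠ 0 := by rw [prj_val]; split_ifs <;> omega
      have hlt : (g (prj N x hc v) : ℕ) < (prj N x hc v : ℕ) := (hg _).2 hp0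
      rw [emb_val]
      have h5 := prj_val N x hc v
      split_ifs at h5 ⊢ <;> omega

lemma del_ins : del N x hc (ins N x hc g) = g := by
  funext v
  show prj N x hc (ins N x hc g (emb N x v)) = g v
  rw [ins_apply_ne N x hc (emb_ne_x N x v), prj_emb, prj_emb]

lemma emb_le_mono {a b : Fin (N-1)} (h : a ≤ b) : emb N x a ≤ emb N x b := by
  rw [Fin.le_def] at h ⊢
  rw [emb_val, emb_val]
  split_ifs <;> omega

lemma istep {v' : Fin (N-1)} (hne : (kids g v').Nonempty) (hPg : emb N x v' ≠ Pg N x g) :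
    nextV (ins N x hc g) (emb N x v') = emb N x (nextV g v') := by
  have hkids : kids (ins N x hc g) (emb N x v') = (kids g v').image (emb N x) := by
    rw [kids_ins_emb N x hc, if_neg hPg]
  have hmem : emb N x (nextV g v') ∈ kids (ins N x hc g) (emb N x v') := by
    rw [hkids]; exact Finset.mem_image.2 ⟨_, nextV_mem hne, rfl⟩
  apply le_antisymm
  · exact nextV_le hmem
  · have h2 := nextV_mem ⟨_, hmem⟩
    rw [hkids] at h2
    obtain ⟨a, hak, ha⟩ := Finset.mem_image.1 h2
    rw [← ha]
    exact emb_le_mono N x hc (nextV_le hak)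

lemma istep_attach (hall : ∀ u' ∈ kids g (Ag N x g), x ≤ (u' : ℕ)) :
    nextV (ins N x hc g) (Pg N x g) = vX N x hc := by
  have hkids : kids (ins N x hc g) (Pg N x g) =
      insert (vX N x hc) ((kids g (Ag N x g)).image (emb N x)) := by
    have heq : emb N x (Ag N x g) = Pg N x g := rfl
    rw [Pg, kids_ins_emb N x hc, if_pos heq]
  have hmem : vX N x hc ∈ kids (ins N x hc g) (Pg N x g) := by
    rw [hkids]; exact Finset.mem_insert_self _ _
  apply le_antisymm
  · exact nextV_le hmem
  · have h2 := nextV_mem ⟨_, hmem⟩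
    rw [hkids, Finset.mem_insert] at h2
    rcases h2 with h2 | h2
    · rw [h2]
    · obtain ⟨a, hak, ha⟩ := Finset.mem_image.1 h2
      rw [Fin.le_def, ← ha, vX_val, emb_val]
      have := hall a hak
      split_ifs <;> omega

lemma ins_endpt (hg : IsRecTree (N-1) g) : (endpt N (ins N x hc g) : ℕ) = x := by
  obtain ⟨h1,h2,h3⟩ := id hc
  set F := ins N x hc g with hF
  set K := Kg N x g with hK
  have hclaim : ∀ k, k ≤ K →
      (nextV F)^[k] (fzero N) = emb N x ((nextV g)^[k] (fzero (N-1)))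
      ∨ (nextV F)^[k] (fzero N) = vX N x hc := by
    intro k hk
    induction k with
    | zero =>
      left
      apply Fin.ext
      simp only [Function.iterate_zero_apply, emb_val, fzero_val]
      exact (if_pos (show (0:ℕ) < x by omega)).symm
    | succ n ih =>
      rcases ih (by omega) with hl | hr
      · set v' := (nextV g)^[n] (fzero (N-1)) with hv'
        by_cases hne : (kids g v').Nonempty
        · have hv'A : v' ≠ Ag N x g := by
            intro heq
            have hlt := lt_nextV hg hne
            have hle : (((nextV g)^[n+1] (fzero (N-1))) : ℕ) ≤ (Ag N x g : ℕ) :=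
              iterG_lt N x hg (by omega)
            rw [Function.iterate_succ_apply', ← hv'] at hle
            rw [heq] at hle hlt
            omega
          have hPg : emb N x v' ≠ Pg N x g := by
            rw [Pg]; exact fun h => hv'A (emb_inj N x h)
          left
          rw [Function.iterate_succ_apply', Function.iterate_succ_apply', hl, ← hv']
          exact istep N x hc hne hPg
        · -- kids g v' empty : v' is the endpoint, equals Ag
          have hempty : kids g v' = ∅ := Finset.not_nonempty_iff_eq_empty.1 hne
          have hAg : Ag N x g = v' := by
            rw [Ag, ← hK, show K = (K - n) + n by omega, Function.iterate_add_apply, ← hv']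
            exact iter_fixed_of_kids_empty hempty _
          right
          rw [Function.iterate_succ_apply', hl]
          have : emb N x v' = Pg N x g := by rw [Pg, hAg]
          rw [this]
          refine istep_attach N x hc ?_
          rw [hAg, hempty]
          intro u' hu'
          exact absurd hu' (Finset.notMem_empty _)
      · right
        rw [Function.iterate_succ_apply', hr]
        exact nextV_eq_of_empty (kids_eq_empty_iff.2 (cc_ins_x N x hc))
  have hclaim2 : (nextV F)^[K + 1] (fzero N) = vX N x hc := by
    rcases hclaim K le_rfl with hl | hr
    · rw [Function.iterate_succ_apply', hl]
      have hall : ∀ u' ∈ kids g (Ag N x g), x ≤ (u' : ℕ) := by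
        rcases Nat.lt_or_ge K (N-1) with hKM | hKM
        · intro u' hu'
          have hge := iterG_after N x (g := g) (K+1) (by rw [← hK]; omega) (by omega)
          push_neg at hge
          have h5 : nextV g (Ag N x g) = (nextV g)^[K+1] (fzero (N-1)) := by
            rw [Function.iterate_succ_apply', Ag, hK]
          have h6 := nextV_le hu'
          rw [h5] at h6
          rw [Fin.le_def] at h6
          omega
        · have hKeq : K = N - 1 := le_antisymm (by rw [hK]; exact Kg_le N x) hKM
          have : Ag N x g = endpt (N-1) g := by
            rw [Ag, ← hK, hKeq, endpt]
          rw [this, kids_endpt hg]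
          intro u' hu'
          exact absurd hu' (Finset.notMem_empty _)
      have hPgeq : emb N x (Ag N x g) = Pg N x g := rfl
      rw [Ag, ← hK] at hPgeq
      rw [hPgeq]
      exact istep_attach N x hc hall
    · rw [Function.iterate_succ_apply', hr]
      exact nextV_eq_of_empty (kids_eq_empty_iff.2 (cc_ins_x N x hc))
  have hfin : (nextV F)^[N] (fzero N) = vX N x hc := by
    have hKN : K + 1 ≤ N := by
      have := Kg_le N x (g := g); rw [← hK] at this; omega
    have h7 : (nextV F)^[(N - (K+1)) + (K+1)] (fzero N) = vX N x hc := by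
      rw [Function.iterate_add_apply, hclaim2]
      exact iter_fixed_of_kids_empty (kids_eq_empty_iff.2 (cc_ins_x N x hc)) _
    have h8 : N - (K+1) + (K+1) = N := by omega
    rwa [h8] at h7
  rw [endpt, hfin, vX_val]


lemma Ag_zero_x_eq_one (hg : IsRecTree (N-1) g) (hA : (Ag N x g : ℕ) = 0) : x = 1 := by
  obtain ⟨h1,h2,h3⟩ := id hc
  have hM2 : 2 ≤ N - 1 := by omega
  have hK0 : Kg N x g = 0 := by
    by_contra hK
    have h4 : 1 ≤ Kg N x g := Nat.one_le_iff_ne_zero.2 hK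
    have h5 : ((nextV g)^[1] (fzero (N-1)) : ℕ) = 1 := by
      simp [nextV_zero hM2 hg]
    have h6 := iter_mono hg (fzero (N-1)) h4
    rw [h5] at h6
    rw [Ag] at hA
    omega
  by_contra hx
  have hx2 : 2 ≤ x := by omega
  have h8 : Kg N x g < 1 := by omega
  have h7 : ¬ (((nextV g)^[1] (fzero (N-1)) : ℕ) < x) :=
    Nat.findGreatest_is_greatest (P := fun k => (((nextV g)^[k] (fzero (N-1))) : ℕ) < x)
      h8 (by omega)
  have h5 : ((nextV g)^[1] (fzero (N-1)) : ℕ) = 1 := by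
    simp [nextV_zero hM2 hg]
  omega

lemma Ag_of_x_eq_one (hg : IsRecTree (N-1) g) (hx : x = 1) : Ag N x g = fzero (N-1) := by
  obtain ⟨h1,h2,h3⟩ := id hc
  have hM2 : 2 ≤ N - 1 := by omega
  have hK0 : Kg N x g = 0 := by
    by_contra hK
    have h4 : 1 ≤ Kg N x g := Nat.one_le_iff_ne_zero.2 hK
    have h5 : ((nextV g)^[1] (fzero (N-1)) : ℕ) = 1 := by simp [nextV_zero hM2 hg]
    have h6 := iter_mono hg (fzero (N-1)) h4
    rw [h5] at h6
    have h7 : ((nextV g)^[Kg N x g] (fzero (N-1)) : ℕ) < x := Ag_lt N x hc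
    omega
  show (nextV g)^[Kg N x g] (fzero (N-1)) = fzero (N-1)
  rw [hK0]
  simp

lemma kids_Ag_empty_iff (hg : IsRecTree (N-1) g) :
    kids g (Ag N x g) = ∅ ↔ (endpt (N-1) g : ℕ) < x := by
  obtain ⟨h1,h2,h3⟩ := id hc
  constructor
  · intro hempty
    have h4 : (nextV g)^[(N-1) - Kg N x g + Kg N x g] (fzero (N-1)) = Ag N x g := by
      rw [Function.iterate_add_apply]
      exact iter_fixed_of_kids_empty hempty _
    have h5 : (N-1) - Kg N x g + Kg N x g = N - 1 := by
      have := Kg_le N x (g := g); omega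
    rw [h5] at h4
    show ((nextV g)^[N-1] (fzero (N-1)) : ℕ) < x
    rw [h4]
    exact Ag_lt N x hc
  · intro hlt
    have hKeq : Kg N x g = N - 1 := by
      apply le_antisymm (Kg_le N x)
      exact Nat.le_findGreatest le_rfl
        (show (((nextV g)^[N-1] (fzero (N-1))) : ℕ) < x from hlt)
    have : Ag N x g = endpt (N-1) g := by
      show (nextV g)^[Kg N x g] (fzero (N-1)) = endpt (N-1) g
      rw [hKeq]; rfl
    rw [this]
    exact kids_endpt hg

lemma ins_leafset (hg : IsRecTree (N-1) g) :
    {v : Fin N | IsLeaf N (ins N x hc g) v} =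
      insert (vX N x hc) ((emb N x) '' ({u | IsLeaf (N-1) g u} \ {Ag N x g})) := by
  obtain ⟨h1,h2,h3⟩ := id hc
  have hM2 : 2 ≤ N - 1 := by omega
  ext w
  simp only [Set.mem_setOf_eq, Set.mem_insert_iff, Set.mem_image, Set.mem_diff,
    Set.mem_singleton_iff]
  by_cases hwx : (w:ℕ) = x
  · have hw : w = vX N x hc := Fin.ext hwx
    constructor
    · intro _; exact Or.inl hw
    · intro _
      rw [hw]
      show IsLeaf N (ins N x hc g) (vX N x hc)
      rw [IsLeaf, if_neg (by rw [vX_val]; omega), cc_ins_x N x hc]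
  · have hw : emb N x (prj N x hc w) = w := emb_prj N x hc w hwx
    by_cases hwP : w = Pg N x g
    · constructor
      · intro hleaf
        exfalso
        have hcc : childCount N (ins N x hc g) w = childCount (N-1) g (Ag N x g) + 1 := by
          have h5 := cc_ins_emb N x hc (g := g) (Ag N x g)
          have h6 : emb N x (Ag N x g) = Pg N x g := rfl
          rw [h6, if_pos rfl] at h5
          rw [hwP, h5]
        rw [IsLeaf] at hleaf
        split_ifs at hleaf with h0
        · have hA0 : (Ag N x g : ℕ) = 0 := by
            have h7 : (Pg N x g : ℕ) = 0 := by rw [← hwP]; exact h0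
            rw [Pg, emb_val] at h7; split_ifs at h7 <;> omega
          have h8 : childCount (N-1) g (Ag N x g) = 0 := by omega
          have hAg : Ag N x g = fzero (N-1) := Fin.ext (by rw [hA0, fzero_val])
          have hone := one_mem_kids hM2 hg
          rw [← hAg] at hone
          rw [kids_eq_empty_iff.2 h8] at hone
          exact absurd hone (Finset.notMem_empty _)
        · omega
      · rintro (heq | ⟨u, ⟨_, hune⟩, hueq⟩)
        · exact absurd (show (w:ℕ) = x by rw [heq, vX_val]) hwx
        · exact absurd (emb_inj N x
            (show emb N x u = emb N x (Ag N x g) by rw [hueq, hwP]; rfl)) hune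
    · have hcc : childCount N (ins N x hc g) w = childCount (N-1) g (prj N x hc w) := by
        have h5 := cc_ins_emb N x hc (g := g) (prj N x hc w)
        rw [hw] at h5
        rw [h5, if_neg hwP, Nat.add_zero]
      have hz : ((prj N x hc w : ℕ) = 0) ↔ ((w:ℕ) = 0) := prj_zero_iff N x hc w hwx
      have hiff : IsLeaf N (ins N x hc g) w ↔ IsLeaf (N-1) g (prj N x hc w) := by
        rw [IsLeaf, IsLeaf, hcc]
        by_cases h0 : (w:ℕ) = 0
        · rw [if_pos h0, if_pos (hz.2 h0)]
        · rw [if_neg h0, if_neg (fun h => h0 (hz.1 h))]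
      constructor
      · intro hleaf
        exact Or.inr ⟨prj N x hc w, ⟨hiff.1 hleaf,
          fun hA => hwP (by rw [← hw, hA]; rfl)⟩, hw⟩
      · rintro (heq | ⟨u, ⟨hul, _⟩, hueq⟩)
        · exact absurd (by rw [heq, vX_val] : (w:ℕ) = x) hwx
        · have hupr : u = prj N x hc w := emb_inj N x (by rw [hueq, hw])
          rw [hupr] at hul
          exact hiff.2 hul

lemma ins_leafCount' (hg : IsRecTree (N-1) g) :
    leafCount N (ins N x hc g) = ({u | IsLeaf (N-1) g u} \ {Ag N x g}).ncard + 1 := by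
  rw [leafCount, ins_leafset N x hc hg]
  rw [Set.ncard_insert_of_notMem ?hnm (Set.toFinite _),
    Set.ncard_image_of_injective _ (emb_inj N x)]
  case hnm =>
    rintro ⟨u, _, hu⟩
    exact emb_ne_x N x u (by rw [hu, vX_val])

lemma ins_leafCount_eq (hg : IsRecTree (N-1) g) :
    leafCount N (ins N x hc g) = leafCount (N-1) g +
      (if (endpt (N-1) g : ℕ) < x then 0
       else if x = 1 ∧ childCount (N-1) g (fzero (N-1)) = 1 then 0 else 1) := by
  obtain ⟨h1,h2,h3⟩ := id hc
  have hM2 : 2 ≤ N - 1 := by omega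
  rw [ins_leafCount' N x hc hg]
  by_cases he : (endpt (N-1) g : ℕ) < x
  · rw [if_pos he]
    have hA0 : (Ag N x g : ℕ) ≠ 0 := by
      intro hA0
      have hx1 : x = 1 := Ag_zero_x_eq_one N x hc hg hA0
      have := endpt_pos hM2 hg
      omega
    have hmem : Ag N x g ∈ {u | IsLeaf (N-1) g u} := by
      show IsLeaf (N-1) g (Ag N x g)
      rw [IsLeaf, if_neg hA0, ← kids_eq_empty_iff]
      exact (kids_Ag_empty_iff N x hc hg).2 he
    have hpos : 1 ≤ ({u | IsLeaf (N-1) g u}).ncard :=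
      (Set.ncard_pos (Set.toFinite _)).2 ⟨_, hmem⟩
    rw [Set.ncard_diff_singleton_of_mem hmem]
    rw [leafCount]
    omega
  · rw [if_neg he]
    have hnm : Ag N x g ∉ {u | IsLeaf (N-1) g u} → 
        ({u | IsLeaf (N-1) g u} \ {Ag N x g}).ncard = leafCount (N-1) g := by
      intro hnm
      rw [Set.diff_singleton_eq_self hnm, leafCount]
    by_cases hC : x = 1 ∧ childCount (N-1) g (fzero (N-1)) = 1
    · rw [if_pos hC]
      have hAg : Ag N x g = fzero (N-1) := Ag_of_x_eq_one N x hc hg hC.1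
      have hmem : Ag N x g ∈ {u | IsLeaf (N-1) g u} := by
        show IsLeaf (N-1) g (Ag N x g)
        rw [IsLeaf, if_pos (by rw [hAg, fzero_val]), hAg]
        exact hC.2
      have hpos : 1 ≤ ({u | IsLeaf (N-1) g u}).ncard :=
        (Set.ncard_pos (Set.toFinite _)).2 ⟨_, hmem⟩
      rw [Set.ncard_diff_singleton_of_mem hmem]
      rw [leafCount]
      omega
    · rw [if_neg hC]
      rw [hnm ?_]
      intro hmem
      have hleaf : IsLeaf (N-1) g (Ag N x g) := hmem
      rw [IsLeaf] at hleaf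
      split_ifs at hleaf with h0
      · have hx1 : x = 1 := Ag_zero_x_eq_one N x hc hg h0
        have hAg : Ag N x g = fzero (N-1) := Ag_of_x_eq_one N x hc hg hx1
        rw [hAg] at hleaf
        exact hC ⟨hx1, hleaf⟩
      · rw [← kids_eq_empty_iff] at hleaf
        exact he ((kids_Ag_empty_iff N x hc hg).1 hleaf)


variable {f : Fin N → Fin N}

lemma Pg_del (hf : IsRecTree N f) (hend : (endpt N f : ℕ) = x) :
    Pg N x (del N x hc f) = f (vX N x hc) := by
  obtain ⟨h1,h2,h3⟩ := id hc
  have hXend : endpt N f = vX N x hc := Fin.ext (by rw [hend, vX_val])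
  have hcc : childCount N f (vX N x hc) = 0 := by
    rw [← kids_eq_empty_iff, ← hXend]; exact kids_endpt hf
  set g := del N x hc f with hgdef
  have hg : IsRecTree (N-1) g := del_rec N x hc hf hcc
  have hex : ∃ k, (nextV f)^[k] (fzero N) = vX N x hc :=
    ⟨N, show (nextV f)^[N] (fzero N) = vX N x hc from hXend⟩
  set m := Nat.find hex with hm
  have hmspec : (nextV f)^[m] (fzero N) = vX N x hc := Nat.find_spec hex
  have hmmin : ∀ k, k < m → (nextV f)^[k] (fzero N) ≠ vX N x hc :=
    fun k hk => Nat.find_min hex hk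
  have hmN : m ≤ N := Nat.find_le (show (nextV f)^[N] (fzero N) = vX N x hc from hXend)
  have hm1 : 1 ≤ m := by
    rcases Nat.eq_zero_or_pos m with h0 | h0
    · exfalso
      rw [h0] at hmspec
      simp only [Function.iterate_zero_apply] at hmspec
      have := congrArg Fin.val hmspec
      rw [fzero_val, vX_val] at this
      omega
    · exact h0
  set p := (nextV f)^[m-1] (fzero N) with hp
  have hstep : nextV f p = vX N x hc := by
    have h4 : (nextV f)^[(m-1)+1] (fzero N) = vX N x hc := by
      rw [show m-1+1 = m by omega]; exact hmspec
    rw [Function.iterate_succ_apply'] at h4; exact h4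
  have hpne : (kids f p).Nonempty := by
    by_contra hne
    rw [Finset.not_nonempty_iff_eq_empty] at hne
    have h5 := nextV_eq_of_empty hne
    have h6 : p = vX N x hc := by rw [← h5, hstep]
    exact hmmin (m-1) (by omega) h6
  have hXmem : vX N x hc ∈ kids f p := by rw [← hstep]; exact nextV_mem hpne
  have hfX : f (vX N x hc) = p := (mem_kids.1 hXmem).2
  have hplt : (p:ℕ) < x := by
    have h7 := (hf (vX N x hc)).2 (by rw [vX_val]; omega)
    rw [hfX, vX_val] at h7
    exact h7
  have hkidsne : ∀ k, k < m → (kids f ((nextV f)^[k] (fzero N))).Nonempty := by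
    intro k hk
    by_contra hne
    rw [Finset.not_nonempty_iff_eq_empty] at hne
    have hfix : (nextV f)^[m - k + k] (fzero N) = (nextV f)^[k] (fzero N) := by
      rw [Function.iterate_add_apply]; exact iter_fixed_of_kids_empty hne _
    rw [show m - k + k = m by omega, hmspec] at hfix
    exact hmmin k hk hfix.symm
  have hvals : ∀ k, k ≤ m - 1 → ((nextV f)^[k] (fzero N) : ℕ) ≤ (p : ℕ) :=
    fun k hk => iter_mono hf _ hk
  have hstrict : ∀ k, k < m → ((nextV f)^[k] (fzero N) : ℕ) < ((nextV f)^[k+1] (fzero N) : ℕ) := by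
    intro k hk
    rw [Function.iterate_succ_apply']
    exact lt_nextV hf (hkidsne k hk)
  have hXnot : ∀ k, k < m - 1 → vX N x hc ∉ kids f ((nextV f)^[k] (fzero N)) := by
    intro k hk hmem
    have h8 := (mem_kids.1 hmem).2
    rw [hfX] at h8
    have h9 := congrArg Fin.val h8
    have h10 := hstrict k (by omega)
    have h11 : ((nextV f)^[k+1] (fzero N) : ℕ) ≤ (p:ℕ) := hvals (k+1) (by omega)
    omega
  have hpath : ∀ k, k ≤ m - 1 → (nextV g)^[k] (fzero (N-1)) = prj N x hc ((nextV f)^[k] (fzero N)) := by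
    intro k hk
    induction k with
    | zero =>
      simp only [Function.iterate_zero_apply]
      apply Fin.ext
      simp only [prj_val, fzero_val]
      exact (if_pos (show (0:ℕ) < x by omega)).symm
    | succ n ih =>
      have h8 := ih (by omega)
      rw [Function.iterate_succ_apply', h8]
      rw [dstep N x hc hcc (by have := hvals n (by omega); omega) (hXnot n (by omega))
        (hkidsne n (by omega))]
      rw [show nextV f ((nextV f)^[n] (fzero N)) = (nextV f)^[n+1] (fzero N) from
        (Function.iterate_succ_apply' _ _ _).symm]
  have hgp : (nextV g)^[m-1] (fzero (N-1)) = prj N x hc p := hpath (m-1) le_rfl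
  have hprjp : (prj N x hc p : ℕ) = (p : ℕ) := by rw [prj_val, if_pos hplt]
  have hpnex : (p : ℕ) ≠ x := by omega
  by_cases hcase : kids f p = {vX N x hc}
  · have hgkids : kids g (prj N x hc p) = ∅ := by
      rw [Finset.eq_empty_iff_forall_notMem]
      intro u hu
      rw [mem_kids_del N x hc hcc, emb_prj N x hc p hpnex, hcase] at hu
      have := Finset.mem_singleton.1 hu
      exact emb_ne_x N x u (by rw [this, vX_val])
    have hfix : ∀ j, (nextV g)^[j + (m-1)] (fzero (N-1)) = prj N x hc p := by
      intro j
      rw [Function.iterate_add_apply, hgp]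
      exact iter_fixed_of_kids_empty hgkids _
    have hPN : ((nextV g)^[N-1] (fzero (N-1)) : ℕ) < x := by
      have h12 := hfix ((N-1) - (m-1))
      rw [show (N-1)-(m-1)+(m-1) = N-1 by omega] at h12
      rw [h12, hprjp]
      exact hplt
    have hKeq : Kg N x g = N - 1 := le_antisymm (Kg_le N x) (Nat.le_findGreatest le_rfl hPN)
    show emb N x (Ag N x g) = f (vX N x hc)
    have hAg : Ag N x g = prj N x hc p := by
      show (nextV g)^[Kg N x g] (fzero (N-1)) = prj N x hc p
      rw [hKeq]
      have h12 := hfix ((N-1) - (m-1))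
      rwa [show (N-1)-(m-1)+(m-1) = N-1 by omega] at h12
    rw [hAg, hfX]
    exact emb_prj N x hc p hpnex
  · have hexy : ∃ y ∈ kids f p, y ≠ vX N x hc := by
      refine Finset.exists_mem_ne ?_ _
      have hc1 : 1 ≤ (kids f p).card := Finset.card_pos.2 ⟨_, hXmem⟩
      rcases Nat.lt_or_ge 1 (kids f p).card with h | h
      · exact h
      · exfalso
        have : (kids f p).card = 1 := by omega
        obtain ⟨a, ha⟩ := Finset.card_eq_one.1 this
        rw [ha] at hXmem
        rw [ha, Finset.mem_singleton.1 hXmem] at hcase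
        exact hcase rfl
    obtain ⟨y, hy, hyne⟩ := hexy
    have hynex : (y : ℕ) ≠ x := fun h => hyne (Fin.ext h)
    have hgne : (kids g (prj N x hc p)).Nonempty := by
      refine ⟨prj N x hc y, ?_⟩
      rw [mem_kids_del N x hc hcc, emb_prj N x hc p hpnex, emb_prj N x hc y hynex]
      exact hy
    have hallge : ∀ u ∈ kids g (prj N x hc p), x ≤ (u:ℕ) := by
      intro u hu
      rw [mem_kids_del N x hc hcc, emb_prj N x hc p hpnex] at hu
      have h10 : vX N x hc ≤ emb N x u := by rw [← hstep]; exact nextV_le hu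
      have h11 : (emb N x u : ℕ) ≠ x := emb_ne_x N x u
      rw [Fin.le_def, vX_val] at h10
      have h12 := emb_val N x u
      split_ifs at h12 <;> omega
    have hgm : x ≤ ((nextV g)^[m] (fzero (N-1)) : ℕ) := by
      rw [show m = (m-1)+1 by omega, Function.iterate_succ_apply', hgp]
      exact hallge _ (nextV_mem hgne)
    have hafter : ∀ n, m - 1 < n → x ≤ ((nextV g)^[n] (fzero (N-1)) : ℕ) := by
      intro n hn
      have h13 : ((nextV g)^[m] (fzero (N-1)) : ℕ) ≤ ((nextV g)^[n] (fzero (N-1)) : ℕ) :=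
        iter_mono hg _ (by omega)
      omega
    have hKeq : Kg N x g = m - 1 := by
      have h14 : Nat.findGreatest (fun k => (((nextV g)^[k] (fzero (N-1))):ℕ) < x) (N-1) = m - 1 := by
        rw [Nat.findGreatest_eq_iff]
        refine ⟨by omega, ?_, ?_⟩
        · intro _
          rw [hgp, hprjp]
          exact hplt
        · intro n hn _
          have := hafter n hn
          omega
      exact h14
    show emb N x (Ag N x g) = f (vX N x hc)
    have hAg : Ag N x g = prj N x hc p := by
      show (nextV g)^[Kg N x g] (fzero (N-1)) = prj N x hc p
      rw [hKeq, hgp]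
    rw [hAg, hfX]
    exact emb_prj N x hc p hpnex

lemma ins_del (hf : IsRecTree N f) (hend : (endpt N f : ℕ) = x) :
    ins N x hc (del N x hc f) = f := by
  have hXend : endpt N f = vX N x hc := Fin.ext (by rw [hend, vX_val])
  have hcc : childCount N f (vX N x hc) = 0 := by
    rw [← kids_eq_empty_iff, ← hXend]; exact kids_endpt hf
  funext w
  by_cases hwx : (w:ℕ) = x
  · rw [show w = vX N x hc from Fin.ext hwx, ins_apply_x]
    exact Pg_del N x hc hf hend
  · rw [ins_apply_ne N x hc hwx]
    by_cases hw0 : (w:ℕ) = 0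
    · have hr : f w = w := (hf w).1 hw0
      show emb N x (prj N x hc (f (emb N x (prj N x hc w)))) = f w
      rw [emb_prj N x hc w hwx, hr, emb_prj N x hc w hwx]
    · have hfw : (f w : ℕ) ≠ x := fun h => f_ne_vX N x hc hcc hw0 (Fin.ext h)
      show emb N x (prj N x hc (f (emb N x (prj N x hc w)))) = f w
      rw [emb_prj N x hc w hwx, emb_prj N x hc (f w) hfw]

end Del

section Rho

variable {M : ℕ} [NeZero M]

def vone (M : ℕ) (hM : 2 ≤ M) : Fin M := ⟨1, by omega⟩

variable (hM : 2 ≤ M)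

lemma vone_val : (vone M hM : ℕ) = 1 := rfl

lemma fzero_ne_vone : fzero M ≠ vone M hM := by
  intro h
  have := congrArg Fin.val h
  rw [fzero_val, vone_val] at this
  omega

def rho (g : Fin M → Fin M) : Fin M → Fin M :=
  fun w => if g w = vone M hM then fzero M else g w

def rho' (g : Fin M → Fin M) : Fin M → Fin M :=
  fun w => if (w:ℕ) ≠ 1 ∧ (w:ℕ) ≠ 0 ∧ g w = fzero M then vone M hM else g w

variable {g : Fin M → Fin M}

lemma g_one (hg : IsRecTree M g) : g (vone M hM) = fzero M := by
  have := (hg (vone M hM)).2 (by rw [vone_val]; omega)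
  rw [vone_val] at this
  exact Fin.ext (by rw [fzero_val]; omega)

lemma rho_rec (hg : IsRecTree M g) : IsRecTree M (rho hM g) := by
  intro v
  constructor
  · intro h0
    show (if g v = vone M hM then fzero M else g v) = v
    rw [(hg v).1 h0]
    rw [if_neg]
    intro h
    have := congrArg Fin.val h
    rw [vone_val] at this
    omega
  · intro h0
    show ((if g v = vone M hM then fzero M else g v) : Fin M).1 < (v:ℕ)
    have := (hg v).2 h0
    split_ifs with h
    · rw [fzero_val]; omega
    · exact this

lemma rho'_rec (hg : IsRecTree M g) : IsRecTree M (rho' hM g) := by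
  intro v
  constructor
  · intro h0
    show (if (v:ℕ) ≠ 1 ∧ (v:ℕ) ≠ 0 ∧ g v = fzero M then vone M hM else g v) = v
    rw [if_neg (by omega)]
    exact (hg v).1 h0
  · intro h0
    show ((if (v:ℕ) ≠ 1 ∧ (v:ℕ) ≠ 0 ∧ g v = fzero M then vone M hM else g v) : Fin M).1 < (v:ℕ)
    have := (hg v).2 h0
    split_ifs with h
    · rw [vone_val]
      omega
    · exact this

lemma kids_rho_zero : kids (rho hM g) (fzero M) = kids g (fzero M) ∪ kids g (vone M hM) := by
  ext u
  rw [Finset.mem_union, mem_kids, mem_kids, mem_kids]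
  show ((u:ℕ) ≠ 0 ∧ (if g u = vone M hM then fzero M else g u) = fzero M) ↔ _
  split_ifs with h
  · constructor
    · rintro ⟨h0, _⟩; exact Or.inr ⟨h0, h⟩
    · rintro (⟨h0, _⟩ | ⟨h0, _⟩) <;> exact ⟨h0, rfl⟩
  · constructor
    · rintro ⟨h0, h2⟩; exact Or.inl ⟨h0, h2⟩
    · rintro (⟨h0, h2⟩ | ⟨h0, h2⟩)
      · exact ⟨h0, h2⟩
      · exact absurd h2 h

lemma kids_rho_one : kids (rho hM g) (vone M hM) = ∅ := by
  rw [Finset.eq_empty_iff_forall_notMem]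
  intro u hu
  obtain ⟨h0, hp⟩ := mem_kids.1 hu
  revert hp
  show ¬ ((if g u = vone M hM then fzero M else g u) = vone M hM)
  split_ifs with h
  · exact fzero_ne_vone hM
  · exact h

lemma kids_rho_other {v : Fin M} (hv0 : v ≠ fzero M) (hv1 : v ≠ vone M hM) :
    kids (rho hM g) v = kids g v := by
  ext u
  rw [mem_kids, mem_kids]
  show ((u:ℕ) ≠ 0 ∧ (if g u = vone M hM then fzero M else g u) = v) ↔ _
  split_ifs with h
  · constructor
    · rintro ⟨_, h2⟩; exact absurd h2.symm hv0
    · rintro ⟨h1, h2⟩; rw [h] at h2; exact absurd h2.symm hv1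
  · tauto

lemma cc_rho_zero : childCount M (rho hM g) (fzero M) =
    childCount M g (fzero M) + childCount M g (vone M hM) := by
  rw [childCount_eq, childCount_eq, childCount_eq, kids_rho_zero hM]
  apply Finset.card_union_of_disjoint
  rw [Finset.disjoint_left]
  intro u hu1 hu2
  have e1 := (mem_kids.1 hu1).2
  have e2 := (mem_kids.1 hu2).2
  rw [e1] at e2
  exact fzero_ne_vone hM e2

lemma kids_rho'_zero (hg : IsRecTree M g) : kids (rho' hM g) (fzero M) = {vone M hM} := by
  ext u
  rw [mem_kids, Finset.mem_singleton]
  constructor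
  · rintro ⟨h0, hp⟩
    revert hp
    show ((if (u:ℕ) ≠ 1 ∧ (u:ℕ) ≠ 0 ∧ g u = fzero M then vone M hM else g u) = fzero M) → _
    split_ifs with h
    · intro hcon; exact absurd hcon (Ne.symm (fzero_ne_vone hM))
    · intro hgu
      by_cases h1 : (u:ℕ) = 1
      · exact Fin.ext (by rw [vone_val, h1])
      · exact absurd ⟨h1, h0, hgu⟩ h
  · intro hu
    subst hu
    refine ⟨by rw [vone_val]; omega, ?_⟩
    show (if (vone M hM:ℕ) ≠ 1 ∧ (vone M hM:ℕ) ≠ 0 ∧ g (vone M hM) = fzero M then vone M hM else g (vone M hM)) = fzero M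
    rw [if_neg (by rw [vone_val]; omega)]
    exact g_one hM hg

lemma kids_rho'_one (hE : childCount M g (vone M hM) = 0) :
    kids (rho' hM g) (vone M hM) = (kids g (fzero M)).erase (vone M hM) := by
  ext u
  rw [mem_kids, Finset.mem_erase, mem_kids]
  constructor
  · rintro ⟨h0, hp⟩
    revert hp
    show ((if (u:ℕ) ≠ 1 ∧ (u:ℕ) ≠ 0 ∧ g u = fzero M then vone M hM else g u) = vone M hM) → _
    split_ifs with h
    · intro _
      exact ⟨fun he => h.1 (by rw [he, vone_val]), h0, h.2.2⟩
    · intro hgu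
      exfalso
      have : u ∈ kids g (vone M hM) := mem_kids.2 ⟨h0, hgu⟩
      rw [kids_eq_empty_iff.2 hE] at this
      exact absurd this (Finset.notMem_empty _)
  · rintro ⟨hne, h0, hgu⟩
    refine ⟨h0, ?_⟩
    show (if (u:ℕ) ≠ 1 ∧ (u:ℕ) ≠ 0 ∧ g u = fzero M then vone M hM else g u) = vone M hM
    rw [if_pos ⟨fun h1 => hne (Fin.ext (by rw [h1, vone_val])), h0, hgu⟩]

lemma kids_rho'_other {v : Fin M} (hv0 : v ≠ fzero M) (hv1 : v ≠ vone M hM) :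
    kids (rho' hM g) v = kids g v := by
  ext u
  rw [mem_kids, mem_kids]
  show ((u:ℕ) ≠ 0 ∧ (if (u:ℕ) ≠ 1 ∧ (u:ℕ) ≠ 0 ∧ g u = fzero M then vone M hM else g u) = v) ↔ _
  split_ifs with h
  · constructor
    · rintro ⟨_, h2⟩; exact absurd h2.symm hv1
    · rintro ⟨h1, h2⟩; rw [h.2.2] at h2; exact absurd h2.symm hv0
  · tauto

lemma kids_zero_singleton (hg : IsRecTree M g) (hC : childCount M g (fzero M) = 1) :
    kids g (fzero M) = {vone M hM} := by
  rw [childCount_eq] at hC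
  obtain ⟨a, ha⟩ := Finset.card_eq_one.1 hC
  have h1 : (⟨1, by omega⟩ : Fin M) ∈ kids g (fzero M) := one_mem_kids hM hg
  rw [ha] at h1 ⊢
  rw [Finset.mem_singleton] at h1
  rw [← h1]
  rfl

lemma pw1 (hg : IsRecTree M g) (hC : childCount M g (fzero M) = 1) :
    rho' hM (rho hM g) = g := by
  have hsing := kids_zero_singleton hM hg hC
  funext w
  show (if (w:ℕ) ≠ 1 ∧ (w:ℕ) ≠ 0 ∧ rho hM g w = fzero M then vone M hM else rho hM g w) = g w
  by_cases h1 : (w:ℕ) = 1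
  · rw [if_neg (by omega)]
    show (if g w = vone M hM then fzero M else g w) = g w
    have hw : w = vone M hM := Fin.ext (by rw [vone_val, h1])
    rw [hw, g_one hM hg, if_neg (fzero_ne_vone hM)]
  · by_cases h0 : (w:ℕ) = 0
    · rw [if_neg (by omega)]
      show (if g w = vone M hM then fzero M else g w) = g w
      rw [(hg w).1 h0]
      rw [if_neg (fun h => by have := congrArg Fin.val h; rw [vone_val] at this; omega)]
    · -- w ≥ 2
      by_cases hgw : g w = vone M hM
      · have hrw : rho hM g w = fzero M := by
          show (if g w = vone M hM then fzero M else g w) = fzero M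
          rw [if_pos hgw]
        rw [if_pos ⟨h1, h0, hrw⟩, hgw]
      · have hgw0 : g w ≠ fzero M := by
          intro hcon
          have : w ∈ kids g (fzero M) := mem_kids.2 ⟨h0, hcon⟩
          rw [hsing, Finset.mem_singleton] at this
          exact h1 (by rw [this, vone_val])
        have hrw : rho hM g w = g w := by
          show (if g w = vone M hM then fzero M else g w) = g w
          rw [if_neg hgw]
        rw [hrw, if_neg (fun h => hgw0 h.2.2)]

lemma pw2 (hg : IsRecTree M g) (hE : childCount M g (vone M hM) = 0) :
    rho hM (rho' hM g) = g := by
  funext w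
  show (if rho' hM g w = vone M hM then fzero M else rho' hM g w) = g w
  by_cases h1 : (w:ℕ) = 1
  · have hr : rho' hM g w = g w := by
      show (if (w:ℕ) ≠ 1 ∧ (w:ℕ) ≠ 0 ∧ g w = fzero M then vone M hM else g w) = g w
      rw [if_neg (by omega)]
    rw [hr]
    have hw : w = vone M hM := Fin.ext (by rw [vone_val, h1])
    rw [hw, g_one hM hg]
    rw [if_neg (fzero_ne_vone hM)]
  · by_cases h0 : (w:ℕ) = 0
    · have hr : rho' hM g w = g w := by
        show (if (w:ℕ) ≠ 1 ∧ (w:ℕ) ≠ 0 ∧ g w = fzero M then vone M hM else g w) = g w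
        rw [if_neg (by omega)]
      rw [hr, (hg w).1 h0]
      rw [if_neg (fun h => by have := congrArg Fin.val h; rw [vone_val] at this; omega)]
    · by_cases hgw : g w = fzero M
      · have hr : rho' hM g w = vone M hM := by
          show (if (w:ℕ) ≠ 1 ∧ (w:ℕ) ≠ 0 ∧ g w = fzero M then vone M hM else g w) = vone M hM
          rw [if_pos ⟨h1, h0, hgw⟩]
        rw [hr, if_pos rfl, hgw]
      · have hgw1 : g w ≠ vone M hM := by
          intro hcon
          have : w ∈ kids g (vone M hM) := mem_kids.2 ⟨h0, hcon⟩
          rw [kids_eq_empty_iff.2 hE] at this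
          exact absurd this (Finset.notMem_empty _)
        have hr : rho' hM g w = g w := by
          show (if (w:ℕ) ≠ 1 ∧ (w:ℕ) ≠ 0 ∧ g w = fzero M then vone M hM else g w) = g w
          rw [if_neg (fun h => hgw h.2.2)]
        rw [hr, if_neg hgw1]

lemma endpt_rho (hg : IsRecTree M g) : (endpt M (rho hM g) : ℕ) = 1 := by
  rw [endpt_eq_one_iff hM (rho_rec hM hg)]
  rw [← kids_eq_empty_iff]
  exact kids_rho_one hM

lemma cc_rho'_zero (hg : IsRecTree M g) : childCount M (rho' hM g) (fzero M) = 1 := by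
  rw [childCount_eq, kids_rho'_zero hM hg, Finset.card_singleton]

lemma cc_rho'_one (hg : IsRecTree M g) (hE : childCount M g (vone M hM) = 0) :
    childCount M (rho' hM g) (vone M hM) = childCount M g (fzero M) - 1 := by
  rw [childCount_eq, kids_rho'_one hM hE]
  rw [Finset.card_erase_of_mem]
  · rfl
  · exact one_mem_kids hM hg

lemma endpt_rho'_ge (hg : IsRecTree M g) (hE : childCount M g (vone M hM) = 0)
    (hcc2 : 2 ≤ childCount M g (fzero M)) : 2 ≤ (endpt M (rho' hM g) : ℕ) := by
  have hrec := rho'_rec hM hg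
  have h1 : (nextV (rho' hM g))^[1] (fzero M) = vone M hM := by
    simp only [Function.iterate_one]
    have := nextV_zero hM hrec
    rw [this]
    rfl
  have hcc1 : 1 ≤ childCount M (rho' hM g) (vone M hM) := by
    rw [cc_rho'_one hM hg hE]; omega
  have hne : (kids (rho' hM g) (vone M hM)).Nonempty := by
    rw [← Finset.card_pos, ← childCount_eq]; omega
  have h2 : 2 ≤ ((nextV (rho' hM g))^[2] (fzero M) : ℕ) := by
    have : (nextV (rho' hM g))^[2] (fzero M) = nextV (rho' hM g) (vone M hM) := by
      rw [show (2:ℕ) = 1 + 1 from rfl, Function.iterate_add_apply, h1]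
      rfl
    rw [this]
    have := lt_nextV hrec hne
    rw [vone_val] at this
    omega
  have h3 := iter_mono hrec (fzero M) (show 2 ≤ M from hM)
  have h4 : ((nextV (rho' hM g))^[M] (fzero M) : ℕ) = (endpt M (rho' hM g) : ℕ) := rfl
  omega

lemma leafCount_rho (hg : IsRecTree M g) (hC : childCount M g (fzero M) = 1) :
    leafCount M (rho hM g) = leafCount M g := by
  set σ := Equiv.swap (fzero M) (vone M hM) with hσ
  have hiff : ∀ v, IsLeaf M (rho hM g) v ↔ IsLeaf M g (σ v) := by
    intro v
    by_cases hz : v = fzero M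
    · subst hz
      rw [hσ, Equiv.swap_apply_left]
      rw [IsLeaf, IsLeaf, if_pos (fzero_val M), if_neg (by rw [vone_val]; omega)]
      rw [cc_rho_zero hM, hC]
      omega
    · by_cases ho : v = vone M hM
      · subst ho
        rw [hσ, Equiv.swap_apply_right]
        rw [IsLeaf, IsLeaf, if_neg (by rw [vone_val]; omega), if_pos (fzero_val M)]
        constructor
        · intro _; exact hC
        · intro _
          rw [childCount_eq, kids_rho_one hM, Finset.card_empty]
      · rw [hσ, Equiv.swap_apply_of_ne_of_ne hz ho]
        rw [IsLeaf, IsLeaf]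
        rw [childCount_eq, childCount_eq, kids_rho_other hM hz ho]
  have hset : {v | IsLeaf M (rho hM g) v} = σ.symm '' {v | IsLeaf M g v} := by
    ext w
    simp only [Set.mem_setOf_eq, Set.mem_image]
    constructor
    · intro h
      exact ⟨σ w, (hiff w).1 h, σ.symm_apply_apply w⟩
    · rintro ⟨u, hu, rfl⟩
      rw [hiff, σ.apply_symm_apply]
      exact hu
  rw [leafCount, leafCount, hset, Set.ncard_image_of_injective _ σ.symm.injective]

lemma leafCount_rho' (hg : IsRecTree M g) (hE : childCount M g (vone M hM) = 0) :
    leafCount M (rho' hM g) = leafCount M g := by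
  set σ := Equiv.swap (fzero M) (vone M hM) with hσ
  have hiff : ∀ v, IsLeaf M (rho' hM g) v ↔ IsLeaf M g (σ v) := by
    intro v
    by_cases hz : v = fzero M
    · subst hz
      rw [hσ, Equiv.swap_apply_left]
      rw [IsLeaf, IsLeaf, if_pos (fzero_val M), if_neg (by rw [vone_val]; omega)]
      rw [cc_rho'_zero hM hg]
      constructor
      · intro _; exact hE
      · intro _; rfl
    · by_cases ho : v = vone M hM
      · subst ho
        rw [hσ, Equiv.swap_apply_right]
        rw [IsLeaf, IsLeaf, if_neg (by rw [vone_val]; omega), if_pos (fzero_val M)]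
        rw [cc_rho'_one hM hg hE]
        have hcc1 : 1 ≤ childCount M g (fzero M) := by
          rw [childCount_eq]
          exact Finset.card_pos.2 ⟨_, one_mem_kids hM hg⟩
        omega
      · rw [hσ, Equiv.swap_apply_of_ne_of_ne hz ho]
        rw [IsLeaf, IsLeaf]
        rw [childCount_eq, childCount_eq, kids_rho'_other hM hz ho]
  have hset : {v | IsLeaf M (rho' hM g) v} = σ.symm '' {v | IsLeaf M g v} := by
    ext w
    simp only [Set.mem_setOf_eq, Set.mem_image]
    constructor
    · intro h
      exact ⟨σ w, (hiff w).1 h, σ.symm_apply_apply w⟩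
    · rintro ⟨u, hu, rfl⟩
      rw [hiff, σ.apply_symm_apply]
      exact hu
  rw [leafCount, leafCount, hset, Set.ncard_image_of_injective _ σ.symm.injective]

end Rho


section Counting

lemma ncard_sum_stat {α : Type*} [Fintype α] (T : Set α) (stat : α → ℕ) (s : Finset ℕ) :
    ∑ i ∈ s, Set.ncard {a | a ∈ T ∧ stat a = i} = Set.ncard {a | a ∈ T ∧ stat a ∈ s} := by
  classical
  induction s using Finset.induction_on with
  | empty => simp
  | @insert a s ha ih =>
    rw [Finset.sum_insert ha, ih]
    rw [← Set.ncard_union_eq ?disj (Set.toFinite _) (Set.toFinite _)]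
    · congr 1
      ext y
      simp only [Set.mem_union, Set.mem_setOf_eq, Finset.mem_insert]
      tauto
    case disj =>
      rw [Set.disjoint_left]
      rintro y ⟨_, h1⟩ ⟨_, h2⟩
      exact ha (h1 ▸ h2)

lemma R_eq_ncard_endpt (M ℓ' i : ℕ) [NeZero M] :
    R M ℓ' i = Set.ncard {g : Fin M → Fin M |
      (IsRecTree M g ∧ leafCount M g = ℓ') ∧ (endpt M g : ℕ) = i} := by
  rw [R]
  congr 1
  ext g
  simp only [Set.mem_setOf_eq]
  constructor
  · rintro ⟨h1, h2, h3⟩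
    exact ⟨⟨h1, h2⟩, (ends_iff h1).1 h3⟩
  · rintro ⟨⟨h1, h2⟩, h3⟩
    exact ⟨h1, h2, (ends_iff h1).2 h3⟩

lemma sum_R (M ℓ' : ℕ) [NeZero M] (a b : ℕ) :
    ∑ i ∈ Finset.Icc a b, R M ℓ' i =
      Set.ncard {g : Fin M → Fin M |
        (IsRecTree M g ∧ leafCount M g = ℓ') ∧ (endpt M g : ℕ) ∈ Finset.Icc a b} := by
  rw [Finset.sum_congr rfl (fun i _ => R_eq_ncard_endpt M ℓ' i)]
  exact ncard_sum_stat {g : Fin M → Fin M | IsRecTree M g ∧ leafCount M g = ℓ'}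
    (fun g => (endpt M g : ℕ)) (Finset.Icc a b)

end Counting

end RTaux

open RTaux

/-- The recursion for the numbers `R(N, ℓ, x)`. -/
theorem R_recursion (N ℓ x : ℕ) (hN : 2 < N) (hx1 : 1 ≤ x) (hx2 : x ≤ N - 1) :
    R N ℓ x = (∑ i ∈ Finset.Icc (max x 2) (N - 2), R (N - 1) (ℓ - 1) i) +
      ∑ i ∈ Finset.Icc 1 (max (x - 1) 1), R (N - 1) ℓ i := by
  classical
  have hc : 3 ≤ N ∧ 1 ≤ x ∧ x ≤ N - 1 := ⟨by omega, hx1, hx2⟩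
  haveI : NeZero N := ⟨by omega⟩
  haveI : NeZero (N - 1) := ⟨by omega⟩
  have hM2 : 2 ≤ N - 1 := by omega
  set S : Set (Fin N → Fin N) :=
    {f | (IsRecTree N f ∧ leafCount N f = ℓ) ∧ (endpt N f : ℕ) = x} with hS
  set U1 : Set (Fin (N-1) → Fin (N-1)) :=
    {g | (IsRecTree (N-1) g ∧ leafCount (N-1) g = ℓ - 1) ∧
      (endpt (N-1) g : ℕ) ∈ Finset.Icc (max x 2) (N-2)} with hU1
  set U2 : Set (Fin (N-1) → Fin (N-1)) :=
    {g | (IsRecTree (N-1) g ∧ leafCount (N-1) g = ℓ) ∧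
      (endpt (N-1) g : ℕ) ∈ Finset.Icc 1 (max (x-1) 1)} with hU2
  have hL : R N ℓ x = S.ncard := by rw [hS]; exact R_eq_ncard_endpt N ℓ x
  have hsum1 : (∑ i ∈ Finset.Icc (max x 2) (N - 2), R (N - 1) (ℓ - 1) i) = U1.ncard := by
    rw [hU1]; exact sum_R (N-1) (ℓ-1) (max x 2) (N-2)
  have hsum2 : (∑ i ∈ Finset.Icc 1 (max (x - 1) 1), R (N - 1) ℓ i) = U2.ncard := by
    rw [hU2]; exact sum_R (N-1) ℓ 1 (max (x-1) 1)
  rw [hL, hsum1, hsum2]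
  have hdisj : Disjoint U1 U2 := by
    rw [Set.disjoint_left]
    intro g hg1 hg2
    rw [hU1, Set.mem_setOf_eq] at hg1
    rw [hU2, Set.mem_setOf_eq] at hg2
    obtain ⟨_, hg1⟩ := hg1
    obtain ⟨_, hg2⟩ := hg2
    rw [Finset.mem_Icc] at hg1 hg2
    omega
  have hSfacts : ∀ f ∈ S, IsRecTree (N-1) (del N x hc f) ∧
      ins N x hc (del N x hc f) = f ∧
      ℓ = leafCount (N-1) (del N x hc f) +
        (if (endpt (N-1) (del N x hc f) : ℕ) < x then 0
         else if x = 1 ∧ childCount (N-1) (del N x hc f) (fzero (N-1)) = 1 then 0 else 1) := by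
    intro f hfS
    rw [hS, Set.mem_setOf_eq] at hfS
    obtain ⟨⟨hf, hlf⟩, hend⟩ := hfS
    have hXend : endpt N f = vX N x hc := Fin.ext (by rw [hend]; rfl)
    have hcc : childCount N f (vX N x hc) = 0 := by
      rw [← kids_eq_empty_iff, ← hXend]
      exact kids_endpt hf
    have hg : IsRecTree (N-1) (del N x hc f) := del_rec N x hc hf hcc
    have hid : ins N x hc (del N x hc f) = f := ins_del N x hc hf hend
    refine ⟨hg, hid, ?_⟩
    have h5 := ins_leafCount_eq N x hc hg
    rw [hid, hlf] at h5
    exact h5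
  have hTfacts : ∀ h : Fin (N-1) → Fin (N-1), IsRecTree (N-1) h →
      IsRecTree N (ins N x hc h) ∧ (endpt N (ins N x hc h) : ℕ) = x ∧
      del N x hc (ins N x hc h) = h ∧
      leafCount N (ins N x hc h) = leafCount (N-1) h +
        (if (endpt (N-1) h : ℕ) < x then 0
         else if x = 1 ∧ childCount (N-1) h (fzero (N-1)) = 1 then 0 else 1) :=
    fun h hh => ⟨ins_rec N x hc hh, ins_endpt N x hc hh, del_ins N x hc,
      ins_leafCount_eq N x hc hh⟩
  have hccpos : ∀ g : Fin (N-1) → Fin (N-1), IsRecTree (N-1) g →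
      1 ≤ childCount (N-1) g (fzero (N-1)) := by
    intro g hg
    rw [childCount_eq]
    exact Finset.card_pos.2 ⟨_, one_mem_kids hM2 hg⟩
  by_cases hxx : 2 ≤ x
  · -- the case x ≥ 2 : deletion itself is the bijection
    have himg : (del N x hc) '' S = U1 ∪ U2 := by
      ext g
      constructor
      · rintro ⟨f, hfS, rfl⟩
        obtain ⟨hg, hid, hlfg⟩ := hSfacts f hfS
        by_cases he : (endpt (N-1) (del N x hc f) : ℕ) < x
        · right
          rw [if_pos he] at hlfg
          rw [hU2, Set.mem_setOf_eq]
          refine ⟨⟨hg, by omega⟩, ?_⟩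
          rw [Finset.mem_Icc]
          have := endpt_pos hM2 hg
          omega
        · left
          rw [if_neg he, if_neg (fun ha => absurd ha.1 (by omega))] at hlfg
          rw [hU1, Set.mem_setOf_eq]
          refine ⟨⟨hg, by omega⟩, ?_⟩
          rw [Finset.mem_Icc]
          have := (endpt (N-1) (del N x hc f)).isLt
          omega
      · intro hU
        have hgrec : IsRecTree (N-1) g := by
          rcases hU with h | h
          · rw [hU1, Set.mem_setOf_eq] at h; exact h.1.1
          · rw [hU2, Set.mem_setOf_eq] at h; exact h.1.1
        obtain ⟨hrec, hep, hdelins, hlfins⟩ := hTfacts g hgrec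
        refine ⟨ins N x hc g, ?_, hdelins⟩
        rw [hS, Set.mem_setOf_eq]
        refine ⟨⟨hrec, ?_⟩, hep⟩
        rcases hU with h | h
        · rw [hU1, Set.mem_setOf_eq] at h
          obtain ⟨⟨_, hlf1⟩, hicc⟩ := h
          rw [Finset.mem_Icc] at hicc
          rw [if_neg (by omega), if_neg (fun ha => absurd ha.1 (by omega))] at hlfins
          have := leafCount_pos hM2 hgrec
          omega
        · rw [hU2, Set.mem_setOf_eq] at h
          obtain ⟨⟨_, hlf2⟩, hicc⟩ := h
          rw [Finset.mem_Icc] at hicc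
          rw [if_pos (by omega)] at hlfins
          omega
    have hinj : Set.InjOn (del N x hc) S := by
      intro a ha b hb heq
      obtain ⟨_, hida, _⟩ := hSfacts a ha
      obtain ⟨_, hidb, _⟩ := hSfacts b hb
      rw [← hida, ← hidb, heq]
    calc S.ncard = ((del N x hc) '' S).ncard := (Set.ncard_image_of_injOn hinj).symm
      _ = (U1 ∪ U2).ncard := by rw [himg]
      _ = U1.ncard + U2.ncard := Set.ncard_union_eq hdisj (Set.toFinite _) (Set.toFinite _)
  · -- the case x = 1
    have hx1' : x = 1 := by omega
    subst hx1'
    set Ψ : (Fin (N-1) → Fin (N-1)) → (Fin (N-1) → Fin (N-1)) := fun g =>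
      if childCount (N-1) g (fzero (N-1)) = 1 then rho hM2 g
      else if (endpt (N-1) g : ℕ) = 1 then rho' hM2 g else g with hΨ
    have hΨfacts : ∀ g : Fin (N-1) → Fin (N-1), IsRecTree (N-1) g →
        IsRecTree (N-1) (Ψ g) ∧
        (if (endpt (N-1) (Ψ g) : ℕ) = 1 then rho' hM2 (Ψ g)
          else if childCount (N-1) (Ψ g) (fzero (N-1)) = 1 then rho hM2 (Ψ g) else Ψ g) = g ∧
        leafCount (N-1) (Ψ g) = leafCount (N-1) g ∧
        ((childCount (N-1) g (fzero (N-1)) = 1 ∧ (endpt (N-1) (Ψ g) : ℕ) = 1) ∨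
         (childCount (N-1) g (fzero (N-1)) ≠ 1 ∧ 2 ≤ (endpt (N-1) (Ψ g) : ℕ))) := by
      intro g hg
      by_cases hC : childCount (N-1) g (fzero (N-1)) = 1
      · have hPg : Ψ g = rho hM2 g := by
          show (if childCount (N-1) g (fzero (N-1)) = 1 then rho hM2 g
            else if (endpt (N-1) g : ℕ) = 1 then rho' hM2 g else g) = rho hM2 g
          rw [if_pos hC]
        have hep : (endpt (N-1) (rho hM2 g) : ℕ) = 1 := endpt_rho hM2 hg
        rw [hPg]
        refine ⟨rho_rec hM2 hg, ?_, leafCount_rho hM2 hg hC, Or.inl ⟨hC, hep⟩⟩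
        rw [if_pos hep]
        exact pw1 hM2 hg hC
      · by_cases hE : (endpt (N-1) g : ℕ) = 1
        · have hE0 : childCount (N-1) g (vone (N-1) hM2) = 0 :=
            (endpt_eq_one_iff hM2 hg).1 hE
          have hcc2 : 2 ≤ childCount (N-1) g (fzero (N-1)) := by
            have := hccpos g hg; omega
          have hPg : Ψ g = rho' hM2 g := by
            show (if childCount (N-1) g (fzero (N-1)) = 1 then rho hM2 g
              else if (endpt (N-1) g : ℕ) = 1 then rho' hM2 g else g) = rho' hM2 g
            rw [if_neg hC, if_pos hE]
          have hge : 2 ≤ (endpt (N-1) (rho' hM2 g) : ℕ) := endpt_rho'_ge hM2 hg hE0 hcc2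
          rw [hPg]
          refine ⟨rho'_rec hM2 hg, ?_, leafCount_rho' hM2 hg hE0, Or.inr ⟨hC, hge⟩⟩
          rw [if_neg (by omega), if_pos (cc_rho'_zero hM2 hg)]
          exact pw2 hM2 hg hE0
        · have hPg : Ψ g = g := by
            show (if childCount (N-1) g (fzero (N-1)) = 1 then rho hM2 g
              else if (endpt (N-1) g : ℕ) = 1 then rho' hM2 g else g) = g
            rw [if_neg hC, if_neg hE]
          have hge : 2 ≤ (endpt (N-1) g : ℕ) := by
            have := endpt_pos hM2 hg; omega
          rw [hPg]
          refine ⟨hg, ?_, rfl, Or.inr ⟨hC, hge⟩⟩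
          rw [if_neg hE, if_neg hC]
    have himg : ((fun f => Ψ (del N 1 hc f)) '' S) = U1 ∪ U2 := by
      ext g
      constructor
      · rintro ⟨f, hfS, rfl⟩
        show Ψ (del N 1 hc f) ∈ U1 ∪ U2
        obtain ⟨hg, hid, hlfg⟩ := hSfacts f hfS
        rw [if_neg (by have := endpt_pos hM2 hg; omega)] at hlfg
        obtain ⟨hrec', _, hlfΨ, hcase⟩ := hΨfacts _ hg
        rcases hcase with ⟨hC, hep1⟩ | ⟨hC, hep2⟩
        · right
          rw [if_pos ⟨rfl, hC⟩] at hlfg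
          rw [hU2, Set.mem_setOf_eq]
          refine ⟨⟨hrec', by omega⟩, ?_⟩
          rw [Finset.mem_Icc]
          omega
        · left
          rw [if_neg (fun ha => hC ha.2)] at hlfg
          rw [hU1, Set.mem_setOf_eq]
          refine ⟨⟨hrec', by omega⟩, ?_⟩
          rw [Finset.mem_Icc]
          have := (endpt (N-1) (Ψ (del N 1 hc f))).isLt
          omega
      · intro hU
        have hgrec : IsRecTree (N-1) g := by
          rcases hU with h | h
          · rw [hU1, Set.mem_setOf_eq] at h; exact h.1.1
          · rw [hU2, Set.mem_setOf_eq] at h; exact h.1.1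
        rcases hU with h | h
        · rw [hU1, Set.mem_setOf_eq] at h
          obtain ⟨⟨_, hlf1⟩, hicc⟩ := h
          rw [Finset.mem_Icc] at hicc
          have hepne : (endpt (N-1) g : ℕ) ≠ 1 := by omega
          by_cases hCh : childCount (N-1) g (fzero (N-1)) = 1
          · have hvone : childCount (N-1) g (vone (N-1) hM2) ≠ 0 := by
              intro h0
              exact hepne ((endpt_eq_one_iff hM2 hgrec).2 h0)
            have hrrec : IsRecTree (N-1) (rho hM2 g) := rho_rec hM2 hgrec
            obtain ⟨hrec, hep, hdelins, hlfins⟩ := hTfacts (rho hM2 g) hrrec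
            have hccrho : childCount (N-1) (rho hM2 g) (fzero (N-1)) ≠ 1 := by
              rw [cc_rho_zero hM2]; omega
            have heprho : (endpt (N-1) (rho hM2 g) : ℕ) = 1 := endpt_rho hM2 hgrec
            refine ⟨ins N 1 hc (rho hM2 g), ?_, ?_⟩
            · rw [hS, Set.mem_setOf_eq]
              refine ⟨⟨hrec, ?_⟩, hep⟩
              rw [if_neg (by omega), if_neg (fun ha => hccrho ha.2)] at hlfins
              have hlfr : leafCount (N-1) (rho hM2 g) = leafCount (N-1) g :=
                leafCount_rho hM2 hgrec hCh
              have := leafCount_pos hM2 hgrec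
              omega
            · show Ψ (del N 1 hc (ins N 1 hc (rho hM2 g))) = g
              rw [hdelins]
              have hPg : Ψ (rho hM2 g) = rho' hM2 (rho hM2 g) := by
                show (if childCount (N-1) (rho hM2 g) (fzero (N-1)) = 1 then rho hM2 (rho hM2 g)
                  else if (endpt (N-1) (rho hM2 g) : ℕ) = 1 then rho' hM2 (rho hM2 g)
                  else rho hM2 g) = rho' hM2 (rho hM2 g)
                rw [if_neg hccrho, if_pos heprho]
              rw [hPg]
              exact pw1 hM2 hgrec hCh
          · obtain ⟨hrec, hep, hdelins, hlfins⟩ := hTfacts g hgrec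
            refine ⟨ins N 1 hc g, ?_, ?_⟩
            · rw [hS, Set.mem_setOf_eq]
              refine ⟨⟨hrec, ?_⟩, hep⟩
              rw [if_neg (by omega), if_neg (fun ha => hCh ha.2)] at hlfins
              have := leafCount_pos hM2 hgrec
              omega
            · show Ψ (del N 1 hc (ins N 1 hc g)) = g
              rw [hdelins]
              show (if childCount (N-1) g (fzero (N-1)) = 1 then rho hM2 g
                else if (endpt (N-1) g : ℕ) = 1 then rho' hM2 g else g) = g
              rw [if_neg hCh, if_neg hepne]
        · rw [hU2, Set.mem_setOf_eq] at h
          obtain ⟨⟨_, hlf2⟩, hicc⟩ := h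
          rw [Finset.mem_Icc] at hicc
          have hep1 : (endpt (N-1) g : ℕ) = 1 := by omega
          have hE0 : childCount (N-1) g (vone (N-1) hM2) = 0 :=
            (endpt_eq_one_iff hM2 hgrec).1 hep1
          have hrrec : IsRecTree (N-1) (rho' hM2 g) := rho'_rec hM2 hgrec
          obtain ⟨hrec, hep, hdelins, hlfins⟩ := hTfacts (rho' hM2 g) hrrec
          have hccr : childCount (N-1) (rho' hM2 g) (fzero (N-1)) = 1 := cc_rho'_zero hM2 hgrec
          refine ⟨ins N 1 hc (rho' hM2 g), ?_, ?_⟩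
          · rw [hS, Set.mem_setOf_eq]
            refine ⟨⟨hrec, ?_⟩, hep⟩
            rw [if_neg (by have := endpt_pos hM2 hrrec; omega), if_pos ⟨rfl, hccr⟩] at hlfins
            have hlfr : leafCount (N-1) (rho' hM2 g) = leafCount (N-1) g :=
              leafCount_rho' hM2 hgrec hE0
            omega
          · show Ψ (del N 1 hc (ins N 1 hc (rho' hM2 g))) = g
            rw [hdelins]
            have hPg : Ψ (rho' hM2 g) = rho hM2 (rho' hM2 g) := by
              show (if childCount (N-1) (rho' hM2 g) (fzero (N-1)) = 1 then rho hM2 (rho' hM2 g)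
                else if (endpt (N-1) (rho' hM2 g) : ℕ) = 1 then rho' hM2 (rho' hM2 g)
                else rho' hM2 g) = rho hM2 (rho' hM2 g)
              rw [if_pos hccr]
            rw [hPg]
            exact pw2 hM2 hgrec hE0
    have hinj : Set.InjOn (fun f => Ψ (del N 1 hc f)) S := by
      intro a ha b hb heq
      obtain ⟨hga, hida, _⟩ := hSfacts a ha
      obtain ⟨hgb, hidb, _⟩ := hSfacts b hb
      obtain ⟨_, hinva, _, _⟩ := hΨfacts _ hga
      obtain ⟨_, hinvb, _, _⟩ := hΨfacts _ hgb
      have heq' : Ψ (del N 1 hc a) = Ψ (del N 1 hc b) := heq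
      rw [← hida, ← hidb, ← hinva, ← hinvb, heq']
    calc S.ncard = ((fun f => Ψ (del N 1 hc f)) '' S).ncard :=
        (Set.ncard_image_of_injOn hinj).symm
      _ = (U1 ∪ U2).ncard := by rw [himg]
      _ = U1.ncard + U2.ncard := Set.ncard_union_eq hdisj (Set.toFinite _) (Set.toFinite _)
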